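/- Let γ : ℂ ⊇ B(0,r) → M_{2n}(ℂ) be analytic, solving dγ/dz = J A(z) γ(z) with z ↦ A(z) analytic, A(t) real symmetric for real t, γ(0) real symplectic, and suppose ⟨A(0)ξ, ξ⟩ > 0 for every unit eigenvector ξ of γ(0) associated with an eigenvalue on the unit circle. Then there exists δ > 0 such that for all non-real z with |z| < δ, the matrix γ(z) has no eigenvalue on the unit circle. -/

import Mathlib

open Matrix Complex Metric
open Asymptotics Filter Topology

section Helpers

lemma conj_conj_hasDerivAt {f : ℂ → ℂ} {d z : ℂ}
    (h : HasDerivAt f d ((starRingEnd ℂ) z)) :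
    HasDerivAt (fun w => (starRingEnd ℂ) (f ((starRingEnd ℂ) w))) ((starRingEnd ℂ) d) z := by
  rw [hasDerivAt_iff_isLittleO] at h ⊢
  have hc : Filter.Tendsto (fun w => (starRingEnd ℂ) w) (nhds z)
      (nhds ((starRingEnd ℂ) z)) := (Complex.continuous_conj.tendsto z)
  have h2 := h.comp_tendsto hc
  rw [Asymptotics.isLittleO_iff] at h2 ⊢
  intro c hc0
  filter_upwards [h2 hc0] with w hw
  have he : (starRingEnd ℂ) (f ((starRingEnd ℂ) w)) - (starRingEnd ℂ) (f ((starRingEnd ℂ) z))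
        - (w - z) • (starRingEnd ℂ) d
      = (starRingEnd ℂ) (f ((starRingEnd ℂ) w) - f ((starRingEnd ℂ) z)
        - ((starRingEnd ℂ) w - (starRingEnd ℂ) z) • d) := by
    simp only [smul_eq_mul, map_sub, RingHom.map_mul, Complex.conj_conj]
  rw [he]
  calc ‖(starRingEnd ℂ) (f ((starRingEnd ℂ) w) - f ((starRingEnd ℂ) z)
        - ((starRingEnd ℂ) w - (starRingEnd ℂ) z) • d)‖
      = ‖f ((starRingEnd ℂ) w) - f ((starRingEnd ℂ) z)
        - ((starRingEnd ℂ) w - (starRingEnd ℂ) z) • d‖ := RCLike.norm_conj _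
    _ ≤ c * ‖(starRingEnd ℂ) w - (starRingEnd ℂ) z‖ := hw
    _ = c * ‖w - z‖ := by rw [← map_sub, RCLike.norm_conj]

lemma const_of_hasDerivAt_zero {r : ℝ} {f : ℂ → ℂ}
    (h : ∀ z ∈ ball (0:ℂ) r, HasDerivAt f 0 z) {z : ℂ} (hz : z ∈ ball (0:ℂ) r) :
    f z = f 0 := by
  have h0 : (0:ℂ) ∈ ball (0:ℂ) r := by
    rw [mem_ball] at hz ⊢; simpa using (dist_nonneg.trans_lt hz)
  have := Convex.norm_image_sub_le_of_norm_hasDerivWithin_le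
    (f := f) (f' := fun _ => (0:ℂ)) (C := 0) (s := ball (0:ℂ) r)
    (fun x hx => (h x hx).hasDerivWithinAt) (fun x _ => by simp)
    (convex_ball _ _) h0 hz
  have h2 : ‖f z - f 0‖ ≤ 0 := by simpa using this
  have := le_antisymm h2 (norm_nonneg _)
  rwa [norm_eq_zero, sub_eq_zero] at this

lemma hasDerivAt_matrix {ι : Type*} [Fintype ι] {M N : ℂ → Matrix ι ι ℂ}
    {M' N' : Matrix ι ι ℂ} {z : ℂ}
    (hM : ∀ i j, HasDerivAt (fun w => M w i j) (M' i j) z)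
    (hN : ∀ i j, HasDerivAt (fun w => N w i j) (N' i j) z) (i j : ι) :
    HasDerivAt (fun w => (M w * N w) i j) ((M' * N z + M z * N') i j) z := by
  simp only [Matrix.mul_apply, Matrix.add_apply]
  rw [← Finset.sum_add_distrib]
  exact HasDerivAt.fun_sum fun k _ => ((hM i k).mul (hN k j))

lemma hasDerivAt_qform {ι : Type*} [Fintype ι] {P : ℂ → Matrix ι ι ℂ}
    {P' : Matrix ι ι ℂ} {z : ℂ} (v : ι → ℂ)
    (hP : ∀ i j, HasDerivAt (fun w => P w i j) (P' i j) z) :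
    HasDerivAt (fun w => star v ⬝ᵥ (P w *ᵥ v)) (star v ⬝ᵥ (P' *ᵥ v)) z := by
  simp only [dotProduct, Matrix.mulVec, Pi.star_apply]
  exact HasDerivAt.fun_sum fun i _ =>
    ((HasDerivAt.fun_sum fun j _ => (hP i j).mul_const (v j)).const_mul _)

lemma isCompact_segment' {x y : ℂ} : IsCompact (segment ℝ x y) := by
  rw [segment_eq_image ℝ x y]
  exact isCompact_Icc.image (by fun_prop)

lemma map_ofReal_mul {ι : Type*} [Fintype ι] (M N : Matrix ι ι ℝ) :
    (M * N).map Complex.ofReal = M.map Complex.ofReal * N.map Complex.ofReal := by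
  ext i j
  simp [Matrix.mul_apply, Matrix.map_apply]

lemma eqOn_zero_of_real_zero {r : ℝ} {f : ℂ → ℂ}
    (hf : AnalyticOnNhd ℂ f (ball (0:ℂ) r)) (hr : 0 < r)
    (h0 : ∀ t : ℝ, (t:ℂ) ∈ ball (0:ℂ) r → f t = 0) {z : ℂ} (hz : z ∈ ball (0:ℂ) r) :
    f z = 0 := by
  have hfreq : ∃ᶠ w in nhdsWithin 0 {(0:ℂ)}ᶜ, f w = 0 := by
    rw [Filter.frequently_iff]
    intro U hU
    rw [mem_nhdsWithin] at hU
    obtain ⟨V, hVopen, hV0, hVsub⟩ := hU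
    obtain ⟨ε, hε, hball⟩ := Metric.isOpen_iff.1 hVopen 0 hV0
    set t : ℝ := min (ε/2) (r/2) with ht
    have ht0 : (0:ℝ) < t := lt_min (by linarith) (by linarith)
    have htmem : (t:ℂ) ∈ ball (0:ℂ) ε := by
      rw [mem_ball_zero_iff]
      simp only [Complex.norm_real, Real.norm_eq_abs, abs_of_pos ht0]
      exact (min_le_left _ _).trans_lt (by linarith)
    have htr : (t:ℂ) ∈ ball (0:ℂ) r := by
      rw [mem_ball_zero_iff]
      simp only [Complex.norm_real, Real.norm_eq_abs, abs_of_pos ht0]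
      exact (min_le_right _ _).trans_lt (by linarith)
    refine ⟨(t:ℂ), hVsub ⟨hball htmem, ?_⟩, h0 t htr⟩
    simp only [Set.mem_compl_iff, Set.mem_singleton_iff]
    exact_mod_cast ht0.ne'
  exact hf.eqOn_zero_of_preconnected_of_frequently_eq_zero
    (convex_ball _ _).isPreconnected (mem_ball_self hr) hfreq hz

end Helpers

noncomputable def JmatR (n : ℕ) : Matrix (Fin n ⊕ Fin n) (Fin n ⊕ Fin n) ℝ :=
  Matrix.fromBlocks 0 1 (-1) 0

noncomputable def Jmat (n : ℕ) : Matrix (Fin n ⊕ Fin n) (Fin n ⊕ Fin n) ℂ :=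
  Matrix.fromBlocks 0 1 (-1) 0

lemma Jmat_transpose (n : ℕ) : (Jmat n)ᵀ = -Jmat n := by
  simp only [Jmat, Matrix.fromBlocks_transpose, Matrix.fromBlocks_neg,
    Matrix.transpose_zero, Matrix.transpose_one, Matrix.transpose_neg, neg_neg, neg_zero]

lemma Jmat_mul_Jmat (n : ℕ) : Jmat n * Jmat n = -1 := by
  simp only [Jmat, Matrix.fromBlocks_multiply, ← Matrix.fromBlocks_one, Matrix.fromBlocks_neg,
    zero_mul, mul_zero, one_mul, mul_one, neg_mul, mul_neg, zero_add, add_zero, neg_zero, neg_neg]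

lemma JmatR_map (n : ℕ) : (JmatR n).map Complex.ofReal = Jmat n := by
  ext i j
  rcases i with i | i <;> rcases j with j | j <;>
    simp [JmatR, Jmat, Matrix.fromBlocks, Matrix.map_apply, Matrix.one_apply] <;>
    split <;> simp

lemma Jmat_map_conj (n : ℕ) : (Jmat n).map (starRingEnd ℂ) = Jmat n := by
  ext i j
  rcases i with i | i <;> rcases j with j | j <;>
    simp [Jmat, Matrix.fromBlocks, Matrix.map_apply, Matrix.one_apply] <;>
    split <;> simp

set_option maxHeartbeats 2000000 in
/-- For the analytic Hamiltonian system with a Krein-positivity condition at `z = 0`, there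
is a punctured neighbourhood of `0` in which `γ(z)` has no eigenvalue on the unit circle for
non-real `z`. -/
theorem no_unit_eigenvalue_for_nonreal_z (n : ℕ) (r : ℝ) (hr : 0 < r)
    (A γ : ℂ → Matrix (Fin n ⊕ Fin n) (Fin n ⊕ Fin n) ℂ)
    (hAanal : ∀ i j, AnalyticOnNhd ℂ (fun z => A z i j) (ball (0 : ℂ) r))
    (hγanal : ∀ i j, AnalyticOnNhd ℂ (fun z => γ z i j) (ball (0 : ℂ) r))
    (hODE : ∀ z ∈ ball (0 : ℂ) r, ∀ i j,
      HasDerivAt (fun w => γ w i j) ((Jmat n * A z * γ z) i j) z)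
    (hAsymm : ∀ t : ℝ, ((t : ℂ) ∈ ball (0 : ℂ) r) → (A (t : ℂ))ᵀ = A (t : ℂ))
    (hAreal : ∀ t : ℝ, ((t : ℂ) ∈ ball (0 : ℂ) r) → ∀ i j, (A (t : ℂ) i j).im = 0)
    (γ0 : Matrix (Fin n ⊕ Fin n) (Fin n ⊕ Fin n) ℝ)
    (hγ0 : γ0ᵀ * JmatR n * γ0 = JmatR n)
    (hγ0eq : γ 0 = γ0.map Complex.ofReal)
    (hpos : ∀ lam : ℂ, ‖lam‖ = 1 → ∀ ξ : (Fin n ⊕ Fin n) → ℂ, ξ ≠ 0 →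
      (γ 0).mulVec ξ = lam • ξ →
      0 < (∑ j, (A 0).mulVec ξ j * (starRingEnd ℂ) (ξ j)).re) :
    ∃ δ > 0, ∀ z : ℂ, z.im ≠ 0 → ‖z‖ < δ →
      ∀ lam : ℂ, ‖lam‖ = 1 →
        ∀ v : (Fin n ⊕ Fin n) → ℂ, (γ z).mulVec v = lam • v → v = 0 := by
  classical
  have hball0 : (0:ℂ) ∈ ball (0:ℂ) r := mem_ball_self hr
  have hconjmem : ∀ z : ℂ, z ∈ ball (0:ℂ) r → (starRingEnd ℂ) z ∈ ball (0:ℂ) r := by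
    intro z hz
    rw [mem_ball_zero_iff] at hz ⊢
    simpa using hz
  -- A is symmetric on the ball
  have hAsymm' : ∀ z ∈ ball (0:ℂ) r, (A z)ᵀ = A z := by
    intro z hz
    ext i j
    rw [Matrix.transpose_apply]
    have h1 : A z j i - A z i j = 0 := by
      refine eqOn_zero_of_real_zero (f := fun w => A w j i - A w i j) ?_ hr ?_ hz
      · exact (hAanal j i).sub (hAanal i j)
      · intro t ht
        have h2 : (A (t:ℂ))ᵀ i j = A (t:ℂ) i j := by rw [hAsymm t ht]
        rw [Matrix.transpose_apply] at h2
        rw [sub_eq_zero]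
        exact h2
    rw [sub_eq_zero] at h1
    exact h1
  -- key algebraic identity
  have halg : ∀ z ∈ ball (0:ℂ) r, (Jmat n * A z * γ z)ᵀ * Jmat n = (γ z)ᵀ * A z := by
    intro z hz
    rw [Matrix.transpose_mul, Matrix.transpose_mul, hAsymm' z hz, Jmat_transpose]
    calc (γ z)ᵀ * (A z * -Jmat n) * Jmat n
        = (γ z)ᵀ * (A z * (-Jmat n * Jmat n)) := by
          rw [Matrix.mul_assoc, Matrix.mul_assoc]
      _ = (γ z)ᵀ * A z := by
          rw [neg_mul, Jmat_mul_Jmat, neg_neg, mul_one]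
  -- γ is complex symplectic on the ball
  have hsymp : ∀ z ∈ ball (0:ℂ) r, (γ z)ᵀ * Jmat n * γ z = Jmat n := by
    have h0 : (γ 0)ᵀ * Jmat n * γ 0 = Jmat n := by
      rw [hγ0eq, ← JmatR_map, ← Matrix.transpose_map, ← map_ofReal_mul, ← map_ofReal_mul, hγ0]
    have hderiv : ∀ w ∈ ball (0:ℂ) r, ∀ i j,
        HasDerivAt (fun s => ((γ s)ᵀ * Jmat n * γ s) i j) 0 w := by
      intro w hw i j
      set D := Jmat n * A w * γ w with hD
      have hT : ∀ p q, HasDerivAt (fun s => (γ s)ᵀ p q) (Dᵀ p q) w := by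
        intro p q
        simpa only [Matrix.transpose_apply] using hODE w hw q p
      have hTJ : ∀ p q, HasDerivAt (fun s => ((γ s)ᵀ * Jmat n) p q)
          ((Dᵀ * Jmat n + (γ w)ᵀ * 0 : Matrix _ _ ℂ) p q) w :=
        fun p q => hasDerivAt_matrix (M := fun s => (γ s)ᵀ) (N := fun _ => Jmat n)
          hT (fun _ _ => hasDerivAt_const _ _) p q
      have hfull := fun p q => hasDerivAt_matrix (M := fun s => (γ s)ᵀ * Jmat n) (N := γ)
        hTJ (fun p' q' => hODE w hw p' q') p q
      have hzero : (Dᵀ * Jmat n + (γ w)ᵀ * 0) * γ w + ((γ w)ᵀ * Jmat n) * D = 0 := by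
        rw [Matrix.mul_zero, add_zero, halg w hw]
        have e2 : (γ w)ᵀ * Jmat n * D = -((γ w)ᵀ * A w * γ w) := by
          rw [hD]
          calc (γ w)ᵀ * Jmat n * (Jmat n * A w * γ w)
              = (γ w)ᵀ * ((Jmat n * Jmat n) * (A w * γ w)) := by
                rw [Matrix.mul_assoc, Matrix.mul_assoc, Matrix.mul_assoc]
            _ = -((γ w)ᵀ * (A w * γ w)) := by
                rw [Jmat_mul_Jmat, neg_one_mul, Matrix.mul_neg]
            _ = -((γ w)ᵀ * A w * γ w) := by rw [Matrix.mul_assoc]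
        rw [e2, add_neg_cancel]
      have hres := hfull i j
      rw [hzero] at hres
      simpa using hres
    intro z hz
    ext i j
    have hc : ((γ z)ᵀ * Jmat n * γ z) i j = ((γ 0)ᵀ * Jmat n * γ 0) i j :=
      const_of_hasDerivAt_zero (fun w hw => hderiv w hw i j) hz
    rw [hc, h0]
  -- J·J collapse helper
  have hJJ : ∀ (X Y : Matrix (Fin n ⊕ Fin n) (Fin n ⊕ Fin n) ℂ),
      (X * Jmat n) * (Jmat n * Y) = -(X * Y) := by
    intro X Y
    calc (X * Jmat n) * (Jmat n * Y) = X * ((Jmat n * Jmat n) * Y) := by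
          simp only [Matrix.mul_assoc]
      _ = -(X * Y) := by rw [Jmat_mul_Jmat, neg_one_mul, Matrix.mul_neg]
  -- reflection for A
  have hAconj : ∀ z ∈ ball (0:ℂ) r, ∀ i j,
      (starRingEnd ℂ) (A ((starRingEnd ℂ) z) i j) = A z i j := by
    intro z hz i j
    have h1 : (starRingEnd ℂ) (A ((starRingEnd ℂ) z) i j) - A z i j = 0 := by
      refine eqOn_zero_of_real_zero
        (f := fun w => (starRingEnd ℂ) (A ((starRingEnd ℂ) w) i j) - A w i j) ?_ hr ?_ hz
      · apply DifferentiableOn.analyticOnNhd ?_ isOpen_ball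
        intro w hw
        refine DifferentiableAt.differentiableWithinAt (DifferentiableAt.sub ?_
          ((hAanal i j w hw).differentiableAt))
        exact (conj_conj_hasDerivAt
          (((hAanal i j _ (hconjmem w hw)).differentiableAt).hasDerivAt)).differentiableAt
      · intro t ht
        rw [sub_eq_zero, Complex.conj_ofReal]
        exact Complex.conj_eq_iff_im.2 (hAreal t ht i j)
    rw [sub_eq_zero] at h1
    exact h1
  -- the reflected solution
  set η : ℂ → Matrix (Fin n ⊕ Fin n) (Fin n ⊕ Fin n) ℂ :=
    fun z => (γ ((starRingEnd ℂ) z)).map (starRingEnd ℂ) with hη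
  have hηODE : ∀ z ∈ ball (0:ℂ) r, ∀ i j,
      HasDerivAt (fun w => η w i j) ((Jmat n * A z * η z) i j) z := by
    intro z hz i j
    have h1 := conj_conj_hasDerivAt (hODE _ (hconjmem z hz) i j)
    have hAm : (A ((starRingEnd ℂ) z)).map (starRingEnd ℂ) = A z := by
      ext p q; exact hAconj z hz p q
    have h2 : (starRingEnd ℂ) ((Jmat n * A ((starRingEnd ℂ) z) * γ ((starRingEnd ℂ) z)) i j)
        = (Jmat n * A z * η z) i j := by
      have hmm : ((Jmat n * A ((starRingEnd ℂ) z) * γ ((starRingEnd ℂ) z)).map (starRingEnd ℂ))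
          = Jmat n * A z * η z := by
        rw [Matrix.map_mul, Matrix.map_mul, Jmat_map_conj, hAm]
      rw [← hmm, Matrix.map_apply]
    rw [h2] at h1
    exact h1
  -- the symplectic inverse
  set C : ℂ → Matrix (Fin n ⊕ Fin n) (Fin n ⊕ Fin n) ℂ :=
    fun z => -Jmat n * (γ z)ᵀ * Jmat n with hC
  have hCinv : ∀ z ∈ ball (0:ℂ) r, C z * γ z = 1 := by
    intro z hz
    have e : C z * γ z = -Jmat n * ((γ z)ᵀ * Jmat n * γ z) := by
      simp only [hC, Matrix.mul_assoc]
    rw [e, hsymp z hz, Matrix.neg_mul, Jmat_mul_Jmat, neg_neg]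
  have hWd : ∀ w ∈ ball (0:ℂ) r, ∀ p q,
      HasDerivAt (fun s => (C s * η s) p q) 0 w := by
    intro w hw p q
    have hCd : ∀ p q, HasDerivAt (fun s => C s p q)
        ((-Jmat n * (Jmat n * A w * γ w)ᵀ * Jmat n : Matrix _ _ ℂ) p q) w := by
      intro p q
      have hT : ∀ a b, HasDerivAt (fun s => (γ s)ᵀ a b) ((Jmat n * A w * γ w)ᵀ a b) w := by
        intro a b; simpa only [Matrix.transpose_apply] using hODE w hw b a
      have h1 : ∀ a b, HasDerivAt (fun s => (-Jmat n * (γ s)ᵀ) a b)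
          ((0 * (γ w)ᵀ + -Jmat n * (Jmat n * A w * γ w)ᵀ : Matrix _ _ ℂ) a b) w :=
        fun a b => hasDerivAt_matrix (M := fun _ => -Jmat n) (N := fun s => (γ s)ᵀ)
          (fun _ _ => hasDerivAt_const _ _) hT a b
      have h2 := hasDerivAt_matrix (M := fun s => -Jmat n * (γ s)ᵀ) (N := fun _ => Jmat n)
        (N' := 0) h1 (fun _ _ => hasDerivAt_const _ _) p q
      have e : ((0 * (γ w)ᵀ + -Jmat n * (Jmat n * A w * γ w)ᵀ) * Jmat n
            + (-Jmat n * (γ w)ᵀ) * 0 : Matrix _ _ ℂ)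
          = -Jmat n * (Jmat n * A w * γ w)ᵀ * Jmat n := by
        rw [Matrix.mul_zero, add_zero, Matrix.zero_mul, zero_add]
      simp only [Matrix.mul_zero, add_zero, Matrix.zero_mul, zero_add] at h2
      exact h2
    have hzero : (-Jmat n * (Jmat n * A w * γ w)ᵀ * Jmat n) * η w
        + C w * (Jmat n * A w * η w) = 0 := by
      have e1 : (-Jmat n * (Jmat n * A w * γ w)ᵀ * Jmat n) * η w
          = -(Jmat n * ((γ w)ᵀ * (A w * η w))) := by
        rw [Matrix.mul_assoc (-Jmat n), halg w hw]
        simp only [Matrix.neg_mul, Matrix.mul_assoc]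
      have e2 : C w * (Jmat n * A w * η w) = Jmat n * ((γ w)ᵀ * (A w * η w)) := by
        have e3 : C w * (Jmat n * A w * η w)
            = ((-Jmat n * (γ w)ᵀ) * Jmat n) * (Jmat n * (A w * η w)) := by
          simp only [hC, Matrix.mul_assoc]
        rw [e3, hJJ]
        simp only [Matrix.neg_mul, Matrix.mul_assoc, neg_neg]
      rw [e1, e2, neg_add_cancel]
    have h3 := hasDerivAt_matrix (M := C) (N := η) hCd (fun a b => hηODE w hw a b) p q
    rw [hzero] at h3
    simpa using h3
  have hrefl : ∀ z ∈ ball (0:ℂ) r, (γ ((starRingEnd ℂ) z)).map (starRingEnd ℂ) = γ z := by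
    have hW0 : C 0 * η 0 = 1 := by
      have hη0 : η 0 = γ 0 := by
        simp only [hη]
        rw [show (starRingEnd ℂ) (0:ℂ) = 0 from map_zero _, hγ0eq, Matrix.map_map]
        ext i j
        simp [Matrix.map_apply, Complex.conj_ofReal]
      rw [hη0]
      exact hCinv 0 hball0
    have hW : ∀ z ∈ ball (0:ℂ) r, C z * η z = 1 := by
      intro z hz
      ext p q
      have hcc := const_of_hasDerivAt_zero (fun w hw => hWd w hw p q) hz
      rw [hcc, hW0]
    intro z hz
    have h2 : γ z * C z = 1 := mul_eq_one_comm.mp (hCinv z hz)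
    calc (γ ((starRingEnd ℂ) z)).map (starRingEnd ℂ) = η z := rfl
      _ = (γ z * C z) * η z := by rw [h2, Matrix.one_mul]
      _ = γ z * (C z * η z) := by rw [Matrix.mul_assoc]
      _ = γ z := by rw [hW z hz, Matrix.mul_one]
  -- Main argument by contradiction
  by_contra hcon
  push_neg at hcon
  have hseq : ∀ k : ℕ, ∃ z : ℂ, z.im ≠ 0 ∧ ‖z‖ < min (r/2) (1/(k+1)) ∧ ∃ lamk : ℂ,
      ‖lamk‖ = 1 ∧ ∃ v : (Fin n ⊕ Fin n) → ℂ, (γ z) *ᵥ v = lamk • v ∧ v ≠ 0 := by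
    intro k
    have hδ : (0:ℝ) < min (r/2) (1/(k+1)) := lt_min (by linarith) (by positivity)
    obtain ⟨z, h1, h2, lamk, h3, v, h4, h5⟩ := hcon _ hδ
    exact ⟨z, h1, h2, lamk, h3, v, h4, h5⟩
  choose z him hzlt lam hlam v hev hvne using hseq
  set u : ℕ → (Fin n ⊕ Fin n) → ℂ := fun k => ((‖v k‖:ℝ):ℂ)⁻¹ • v k with hu
  have hunorm : ∀ k, ‖u k‖ = 1 := by
    intro k
    have h0 : ‖v k‖ ≠ 0 := norm_ne_zero_iff.2 (hvne k)
    rw [hu]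
    simp only [norm_smul, norm_inv, Complex.norm_real, Real.norm_eq_abs, abs_norm]
    exact inv_mul_cancel₀ h0
  have huev : ∀ k, γ (z k) *ᵥ u k = lam k • u k := by
    intro k
    rw [hu]
    simp only []
    rw [Matrix.mulVec_smul, hev k, smul_comm]
  have hune : ∀ k, u k ≠ 0 := by
    intro k h
    have := hunorm k
    rw [h] at this
    simp at this
  have hKc : IsCompact ((sphere (0:ℂ) 1) ×ˢ (sphere (0:(Fin n ⊕ Fin n) → ℂ) 1)) :=
    (isCompact_sphere _ _).prod (isCompact_sphere _ _)
  have hmem : ∀ k, (lam k, u k) ∈ (sphere (0:ℂ) 1) ×ˢ (sphere (0:(Fin n ⊕ Fin n) → ℂ) 1) := by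
    intro k
    refine Set.mem_prod.2 ⟨?_, ?_⟩
    · rw [mem_sphere_zero_iff_norm]
      exact hlam k
    · rw [mem_sphere_zero_iff_norm]
      exact hunorm k
  obtain ⟨⟨l, w⟩, hlw, φ, hφ, hconv⟩ := hKc.tendsto_subseq hmem
  have hlt : Tendsto (fun k => lam (φ k)) atTop (𝓝 l) := (continuous_fst.tendsto _).comp hconv
  have hwt : Tendsto (fun k => u (φ k)) atTop (𝓝 w) := (continuous_snd.tendsto _).comp hconv
  have hzb : ∀ k : ℕ, ‖z (φ k)‖ ≤ 1/(k+1) := by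
    intro k
    have h8 := (hzlt (φ k)).trans_le (min_le_right _ _)
    have h9 : (1:ℝ)/(φ k+1) ≤ 1/(k+1) := by
      apply one_div_le_one_div_of_le (by positivity)
      have hkk : (k:ℝ) ≤ (φ k : ℝ) := Nat.cast_le.2 hφ.le_apply
      linarith
    linarith
  have hzt : Tendsto (fun k => z (φ k)) atTop (𝓝 0) := by
    refine squeeze_zero_norm (a := fun k : ℕ => 1/(k+1)) ?_ tendsto_one_div_add_atTop_nhds_zero_nat
    intro k
    exact hzb k
  have heig : γ 0 *ᵥ w = l • w := by
    funext i
    have h1 : Tendsto (fun k => (γ (z (φ k)) *ᵥ u (φ k)) i) atTop (𝓝 ((γ 0 *ᵥ w) i)) := by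
      simp only [Matrix.mulVec, dotProduct]
      apply tendsto_finset_sum
      intro j _
      exact Tendsto.mul (((hγanal i j 0 hball0).continuousAt.tendsto).comp hzt)
        (tendsto_pi_nhds.1 hwt j)
    have h2 : Tendsto (fun k => (lam (φ k) • u (φ k)) i) atTop (𝓝 ((l • w) i)) := by
      simp only [Pi.smul_apply, smul_eq_mul]
      exact hlt.mul (tendsto_pi_nhds.1 hwt i)
    have h3 : (fun k => (γ (z (φ k)) *ᵥ u (φ k)) i) = fun k => (lam (φ k) • u (φ k)) i := by
      funext k
      rw [huev (φ k)]
    rw [h3] at h1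
    exact tendsto_nhds_unique h1 h2
  have hwnorm : ‖w‖ = 1 := mem_sphere_zero_iff_norm.1 hlw.2
  have hwne : w ≠ 0 := by
    intro h
    rw [h] at hwnorm
    simp at hwnorm
  have habs_l : ‖l‖ = 1 := by
    exact mem_sphere_zero_iff_norm.1 hlw.1
  have hq := hpos l habs_l w hwne heig
  set G : ℂ → ℂ → ((Fin n ⊕ Fin n) → ℂ) → ℂ :=
    fun s ζ x => star x ⬝ᵥ (((γ s)ᵀ * A s * γ ζ) *ᵥ x) with hG
  have hGtendAt : ∀ (ζ : ℂ) (x : (Fin n ⊕ Fin n) → ℂ), ∀ s₀ ∈ ball (0:ℂ) r,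
      Tendsto (fun s => G s ζ x) (𝓝 s₀) (𝓝 (G s₀ ζ x)) := by
    intro ζ x s₀ hs₀
    simp only [hG, dotProduct, Matrix.mulVec, Matrix.mul_apply,
      Matrix.transpose_apply, Pi.star_apply]
    apply tendsto_finset_sum
    intro i _
    apply Tendsto.mul tendsto_const_nhds
    apply tendsto_finset_sum
    intro j _
    apply Tendsto.mul ?_ tendsto_const_nhds
    apply tendsto_finset_sum
    intro q _
    apply Tendsto.mul ?_ tendsto_const_nhds
    apply tendsto_finset_sum
    intro p _
    exact Tendsto.mul (hγanal p i s₀ hs₀).continuousAt (hAanal p q s₀ hs₀).continuousAt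
  have hGtend : ∀ (a b : ℕ → ℂ) (c : ℕ → (Fin n ⊕ Fin n) → ℂ),
      Tendsto a atTop (𝓝 0) → Tendsto b atTop (𝓝 0) → Tendsto c atTop (𝓝 w) →
      Tendsto (fun k => G (a k) (b k) (c k)) atTop (𝓝 (G 0 0 w)) := by
    intro a b cc ha hb hcc
    simp only [hG, dotProduct, Matrix.mulVec, Matrix.mul_apply,
      Matrix.transpose_apply, Pi.star_apply]
    apply tendsto_finset_sum
    intro i _
    apply Tendsto.mul
    · exact (continuous_star.tendsto _).comp (tendsto_pi_nhds.1 hcc i)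
    · apply tendsto_finset_sum
      intro j _
      apply Tendsto.mul ?_ (tendsto_pi_nhds.1 hcc j)
      apply tendsto_finset_sum
      intro q _
      apply Tendsto.mul ?_ (((hγanal q j 0 hball0).continuousAt.tendsto).comp hb)
      apply tendsto_finset_sum
      intro p _
      exact Tendsto.mul (((hγanal p i 0 hball0).continuousAt.tendsto).comp ha)
        (((hAanal p q 0 hball0).continuousAt.tendsto).comp ha)
  -- the key estimate
  have key : ∀ ζ : ℂ, ζ.im ≠ 0 → ‖ζ‖ < r/2 → ∀ μ : ℂ, ‖μ‖ = 1 →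
      ∀ x : (Fin n ⊕ Fin n) → ℂ, γ ζ *ᵥ x = μ • x →
      ∃ s : ℂ, ‖s‖ ≤ ‖ζ‖ ∧
        ‖G 0 ζ x‖ ≤ ‖G s ζ x - G 0 ζ x‖ := by
    intro ζ hζim hζr μ hμ x hx
    have hζball : ζ ∈ ball (0:ℂ) r := by
      rw [mem_ball_zero_iff]
      linarith
    have hseg : segment ℝ ζ ((starRingEnd ℂ) ζ) ⊆ closedBall (0:ℂ) (‖ζ‖) := by
      apply (convex_closedBall _ _).segment_subset
      · rw [mem_closedBall_zero_iff]
      · rw [mem_closedBall_zero_iff, Complex.norm_conj]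
    have hsegball : segment ℝ ζ ((starRingEnd ℂ) ζ) ⊆ ball (0:ℂ) r := by
      intro s hs
      have h1 := hseg hs
      rw [mem_closedBall_zero_iff] at h1
      rw [mem_ball_zero_iff]
      calc ‖s‖ ≤ ‖ζ‖ := h1
        _ < r := by linarith
    set g : ℂ → ℂ := fun s => star x ⬝ᵥ (((γ s)ᵀ * Jmat n * γ ζ) *ᵥ x) with hg
    have hgd : ∀ s ∈ ball (0:ℂ) r, HasDerivAt g (G s ζ x) s := by
      intro s hs
      have hT : ∀ a b, HasDerivAt (fun w => (γ w)ᵀ a b) ((Jmat n * A s * γ s)ᵀ a b) s := by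
        intro a b
        simpa only [Matrix.transpose_apply] using hODE s hs b a
      have h1 : ∀ a b, HasDerivAt (fun w => ((γ w)ᵀ * Jmat n) a b)
          (((Jmat n * A s * γ s)ᵀ * Jmat n + (γ s)ᵀ * 0 : Matrix _ _ ℂ) a b) s :=
        fun a b => hasDerivAt_matrix (M := fun w => (γ w)ᵀ) (N := fun _ => Jmat n)
          hT (fun _ _ => hasDerivAt_const _ _) a b
      have h2 : ∀ a b, HasDerivAt (fun w => ((γ w)ᵀ * Jmat n * γ ζ) a b)
          ((((Jmat n * A s * γ s)ᵀ * Jmat n + (γ s)ᵀ * 0) * γ ζ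
            + ((γ s)ᵀ * Jmat n) * 0 : Matrix _ _ ℂ) a b) s :=
        fun a b => hasDerivAt_matrix (M := fun w => (γ w)ᵀ * Jmat n) (N := fun _ => γ ζ)
          h1 (fun _ _ => hasDerivAt_const _ _) a b
      have h3 := hasDerivAt_qform x h2
      have e : ((((Jmat n * A s * γ s)ᵀ * Jmat n + (γ s)ᵀ * 0) * γ ζ
            + ((γ s)ᵀ * Jmat n) * 0) : Matrix _ _ ℂ) = (γ s)ᵀ * A s * γ ζ := by
        rw [Matrix.mul_zero, add_zero, Matrix.mul_zero, add_zero, halg s hs]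
      rw [e] at h3
      exact h3
    have hγconj : ∀ i j, γ ((starRingEnd ℂ) ζ) i j = (starRingEnd ℂ) (γ ζ i j) := by
      intro i j
      have h5 : (starRingEnd ℂ) (γ ((starRingEnd ℂ) ζ) i j) = γ ζ i j := by
        rw [← Matrix.map_apply (f := ⇑(starRingEnd ℂ)), hrefl ζ hζball]
      calc γ ((starRingEnd ℂ) ζ) i j
          = (starRingEnd ℂ) ((starRingEnd ℂ) (γ ((starRingEnd ℂ) ζ) i j)) :=
            (Complex.conj_conj _).symm
        _ = (starRingEnd ℂ) (γ ζ i j) := by rw [h5]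
    have hμ1 : (starRingEnd ℂ) μ * μ = 1 := by
      rw [mul_comm, Complex.mul_conj]
      rw [← Complex.sq_norm, hμ]
      norm_num
    have hgend : g ((starRingEnd ℂ) ζ) = g ζ := by
      have hγc : (γ ((starRingEnd ℂ) ζ))ᵀ = (γ ζ)ᴴ := by
        ext i j
        rw [Matrix.transpose_apply, Matrix.conjTranspose_apply, hγconj j i]
        rfl
      have hgζ : g ζ = star x ⬝ᵥ (Jmat n *ᵥ x) := by
        show star x ⬝ᵥ (((γ ζ)ᵀ * Jmat n * γ ζ) *ᵥ x) = _
        rw [hsymp ζ hζball]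
      have hgc : g ((starRingEnd ℂ) ζ)
          = star x ⬝ᵥ (((γ ζ)ᴴ * Jmat n * γ ζ) *ᵥ x) := by
        show star x ⬝ᵥ (((γ ((starRingEnd ℂ) ζ))ᵀ * Jmat n * γ ζ) *ᵥ x) = _
        rw [hγc]
      rw [hgc, hgζ]
      have e1 : ((γ ζ)ᴴ * Jmat n * γ ζ) *ᵥ x = (γ ζ)ᴴ *ᵥ (Jmat n *ᵥ (γ ζ *ᵥ x)) := by
        rw [Matrix.mulVec_mulVec, Matrix.mulVec_mulVec]
      rw [e1, hx, Matrix.mulVec_smul, Matrix.mulVec_smul, dotProduct_smul,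
        Matrix.dotProduct_mulVec, ← Matrix.star_mulVec, hx, star_smul,
        smul_dotProduct, smul_eq_mul, smul_eq_mul, ← mul_assoc]
      rw [show star μ = (starRingEnd ℂ) μ from rfl]
      rw [mul_comm μ _, hμ1, one_mul]
    set c : ℂ := G 0 ζ x with hc
    have hcont2 : ContinuousOn (fun s => ‖G s ζ x - c‖)
        (segment ℝ ζ ((starRingEnd ℂ) ζ)) := by
      intro s hs
      have h6 : ContinuousAt (fun s => G s ζ x) s := hGtendAt ζ x s (hsegball hs)
      exact (continuous_norm.continuousAt.comp
        (h6.sub continuousAt_const)).continuousWithinAt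
    obtain ⟨s₀, hs₀mem, hs₀max⟩ := isCompact_segment'.exists_isMaxOn
      ⟨ζ, left_mem_segment ℝ _ _⟩ hcont2
    have hMVT := Convex.norm_image_sub_le_of_norm_hasDerivWithin_le
      (f := fun s => g s - s * c) (f' := fun s => G s ζ x - c)
      (C := ‖G s₀ ζ x - c‖) (s := segment ℝ ζ ((starRingEnd ℂ) ζ))
      (fun s hs => by
        have h7 := (hgd s (hsegball hs)).sub ((hasDerivAt_id s).mul_const c)
        rw [one_mul] at h7
        exact h7.hasDerivWithinAt)
      (fun s hs => by
        have h8 := hs₀max hs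
        simpa using h8)
      (convex_segment _ _) (left_mem_segment ℝ _ _) (right_mem_segment ℝ _ _)
    have h9 : ‖g ((starRingEnd ℂ) ζ) - (starRingEnd ℂ) ζ * c - (g ζ - ζ * c)‖
        = ‖(starRingEnd ℂ) ζ - ζ‖ * ‖c‖ := by
      rw [hgend]
      have e2 : g ζ - (starRingEnd ℂ) ζ * c - (g ζ - ζ * c)
          = -(((starRingEnd ℂ) ζ - ζ) * c) := by ring
      rw [e2, norm_neg, norm_mul]
    have hne : (0:ℝ) < ‖(starRingEnd ℂ) ζ - ζ‖ := by
      rw [norm_pos_iff, sub_ne_zero]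
      intro h
      exact hζim (Complex.conj_eq_iff_im.1 h)
    have hcle : ‖c‖ ≤ ‖G s₀ ζ x - c‖ := by
      have h10 : ‖(starRingEnd ℂ) ζ - ζ‖ * ‖c‖
          ≤ ‖G s₀ ζ x - c‖ * ‖(starRingEnd ℂ) ζ - ζ‖ := by
        rw [← h9]
        exact hMVT
      rw [mul_comm (‖G s₀ ζ x - c‖)] at h10
      exact le_of_mul_le_mul_left h10 hne
    refine ⟨s₀, ?_, ?_⟩
    · have h11 := hseg hs₀mem
      rw [mem_closedBall_zero_iff] at h11
      exact h11
    · exact hcle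
  -- apply the key estimate along the sequence
  have hkey : ∀ k : ℕ, ∃ s : ℂ, ‖s‖ ≤ ‖z (φ k)‖ ∧
      ‖G 0 (z (φ k)) (u (φ k))‖
        ≤ ‖G s (z (φ k)) (u (φ k)) - G 0 (z (φ k)) (u (φ k))‖ := by
    intro k
    exact key (z (φ k)) (him (φ k)) ((hzlt (φ k)).trans_le (min_le_left _ _))
      (lam (φ k)) (hlam (φ k)) (u (φ k)) (huev (φ k))
  choose sfn hs1 hs2 using hkey
  have hst : Tendsto sfn atTop (𝓝 0) := by
    refine squeeze_zero_norm (a := fun k : ℕ => 1/(k+1)) ?_ tendsto_one_div_add_atTop_nhds_zero_nat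
    intro k
    exact (hs1 k).trans (hzb k)
  have hq0 : G 0 0 w = 0 := by
    have t1 := hGtend sfn (fun k => z (φ k)) (fun k => u (φ k)) hst hzt hwt
    have t2 := hGtend (fun _ => 0) (fun k => z (φ k)) (fun k => u (φ k))
      tendsto_const_nhds hzt hwt
    have t4 : Tendsto (fun k => ‖G 0 (z (φ k)) (u (φ k))‖) atTop
        (𝓝 (‖G 0 0 w‖)) := (continuous_norm.tendsto _).comp t2
    have t5 : Tendsto (fun k => ‖G (sfn k) (z (φ k)) (u (φ k))
        - G 0 (z (φ k)) (u (φ k))‖) atTop (𝓝 0) := by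
      have t6 := (continuous_norm.tendsto _).comp (t1.sub t2)
      simpa [Function.comp_def] using t6
    have h10 : ‖G 0 0 w‖ ≤ 0 := le_of_tendsto_of_tendsto' t4 t5 hs2
    exact norm_eq_zero.mp (le_antisymm h10 (norm_nonneg _))
  -- compute G 0 0 w
  have hγ0T : (γ 0)ᵀ = (γ 0)ᴴ := by
    ext i j
    rw [Matrix.transpose_apply, Matrix.conjTranspose_apply, hγ0eq]
    simp [Matrix.map_apply, Complex.conj_ofReal]
  have hl1 : l * star l = 1 := by
    rw [show star l = (starRingEnd ℂ) l from rfl, Complex.mul_conj, ← Complex.sq_norm, habs_l]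
    norm_num
  have hcompute : G 0 0 w = star w ⬝ᵥ (A 0 *ᵥ w) := by
    show star w ⬝ᵥ (((γ 0)ᵀ * A 0 * γ 0) *ᵥ w) = _
    rw [hγ0T]
    rw [← Matrix.mulVec_mulVec, ← Matrix.mulVec_mulVec, heig, Matrix.mulVec_smul,
      Matrix.mulVec_smul, dotProduct_smul,
      Matrix.dotProduct_mulVec, ← Matrix.star_mulVec, heig, star_smul,
      smul_dotProduct, smul_eq_mul, smul_eq_mul, ← mul_assoc, hl1, one_mul]
  have hfinal : star w ⬝ᵥ (A 0 *ᵥ w) = ∑ j, (A 0 *ᵥ w) j * (starRingEnd ℂ) (w j) := by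
    simp only [dotProduct, Pi.star_apply]
    exact Finset.sum_congr rfl fun j _ => mul_comm _ _
  rw [hcompute, hfinal] at hq0
  rw [hq0] at hq
  simp at hq
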